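/- Let M be a positroid with Grassmann necklace (I_1,...,I_n), decorated permutation π, j a non-fixed point, and phi(a) as above for the contraction setting. For a ∈ (π⁻¹(j), j) (cyclic interval), we have j ∈ I_t for all t ∈ [π⁻¹(j)+1, j], and consequently phi(a) = phi(a+1) = j and μ(a) = π(a), where μ is the decorated permutation of M' = {H ∈ M : j ∈ H}. -/

import Mathlib

open Finset

/-- Position of `a` in the cyclic (linear) order starting at `t` on `Fin n`. -/
def cval {n : ℕ} (t a : Fin n) : ℕ := ((a - t : Fin n) : ℕ)

/-- Gale order on finsets of `Fin n` induced by the linear order with key `f`: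
compare the sorted lists of keys coordinatewise. -/
def galeLEKey {n : ℕ} (f : Fin n → ℕ) (A B : Finset (Fin n)) : Prop :=
  List.Forall₂ (· ≤ ·) ((A.image f).sort (· ≤ ·)) ((B.image f).sort (· ≤ ·))

/-- Gale order `≤_t` induced by the cyclic order starting at `t`. -/
def galeLE {n : ℕ} (t : Fin n) (A B : Finset (Fin n)) : Prop :=
  galeLEKey (cval t) A B

/-- The set of maximal elements of `D` w.r.t. `≤_a` (a singleton when `D` is nonempty). -/
def cmax {n : ℕ} (a : Fin n) (D : Finset (Fin n)) : Finset (Fin n) :=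
  D.filter (fun x => ∀ y ∈ D, cval a y ≤ cval a x)

/-- The set of minimal elements of `D` w.r.t. `≤_a` (a singleton when `D` is nonempty). -/
def cmin {n : ℕ} (a : Fin n) (D : Finset (Fin n)) : Finset (Fin n) :=
  D.filter (fun x => ∀ y ∈ D, cval a x ≤ cval a y)

/-- A Grassmann necklace on `[n]`. -/
def IsGrassmannNecklace {n : ℕ} [NeZero n] (I : Fin n → Finset (Fin n)) : Prop :=
  ∀ i : Fin n,
    (i ∈ I i → ∃ j : Fin n, I (i + 1) = insert j (I i \ {i})) ∧
    (i ∉ I i → I (i + 1) = I i)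

/-- A decorated permutation: a permutation with fixed points colored by `1` or `-1`
(non-fixed points carry the dummy color `1`). -/
structure DecoratedPerm (n : ℕ) where
  π : Equiv.Perm (Fin n)
  col : Fin n → ℤ
  col_fixed : ∀ i, π i = i → col i = 1 ∨ col i = -1
  col_nonfixed : ∀ i, π i ≠ i → col i = 1

/-- The Grassmann necklace associated to a decorated permutation:
`I_r = { i : i <_r π⁻¹(i), or π(i) = i and col(i) = -1 }`. -/
def necklaceOf {n : ℕ} (P : DecoratedPerm n) : Fin n → Finset (Fin n) :=
  fun r => Finset.univ.filter
    (fun i => cval r i < cval r (P.π.symm i) ∨ (P.π i = i ∧ P.col i = -1))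

/-- The forward map from Grassmann necklaces to decorated permutations:
`P` corresponds to the necklace `I`. -/
def Corresponds {n : ℕ} [NeZero n] (I : Fin n → Finset (Fin n)) (P : DecoratedPerm n) : Prop :=
  ∀ i : Fin n,
    ((I (i + 1) = I i ∧ i ∉ I i) → (P.π i = i ∧ P.col i = 1)) ∧
    ((I (i + 1) = I i ∧ i ∈ I i) → (P.π i = i ∧ P.col i = -1)) ∧
    (∀ j : Fin n, j ≠ i → i ∈ I i → I (i + 1) = insert j (I i \ {i}) → P.π i = j)

/-- `phiSet I j a` is `{j}` if `j ∈ I_a`, and otherwise `{max_a (I_a \ I_j)}`. -/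
def phiSet {n : ℕ} (I : Fin n → Finset (Fin n)) (j a : Fin n) : Finset (Fin n) :=
  if j ∈ I a then {j} else cmax a (I a \ I j)

/-- One pass of the contraction algorithm (fuel-indexed; the loop walks `a ← a+1`). -/
def contractLoop {n : ℕ} [NeZero n] (π : Equiv.Perm (Fin n)) (j : Fin n) :
    ℕ → (Fin n → Fin n) → (Fin n → ℤ) → Fin n → Fin n →
      (Fin n → Fin n) × (Fin n → ℤ)
  | 0, μ, c, q, a => (Function.update μ a q, c)
  | fuel + 1, μ, c, q, a =>
    if π a = j then (Function.update μ a q, c)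
    else if q = a ∨ (cval (a + 1) q < cval (a + 1) (π a) ∧
                      cval (a + 1) (π a) < cval (a + 1) j) then
      contractLoop π j fuel (Function.update μ a q)
        (if q = a then Function.update c a 1 else c) (π a) (a + 1)
    else
      contractLoop π j fuel μ c q (a + 1)

/-- The contraction algorithm: output `(μ, col')` from `(π, col)` and `j`. -/
def contractAlg {n : ℕ} [NeZero n] (π : Equiv.Perm (Fin n)) (col : Fin n → ℤ) (j : Fin n) :
    (Fin n → Fin n) × (Fin n → ℤ) :=
  contractLoop π j n (Function.update (⇑π) j j) (Function.update col j 1) (π j) (j + 1)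

/-- One pass of the restriction algorithm (the loop walks `a ← a-1`). -/
def restrictLoop {n : ℕ} [NeZero n] (π : Equiv.Perm (Fin n)) (j : Fin n) :
    ℕ → (Fin n → Fin n) → (Fin n → ℤ) → Fin n → Fin n →
      (Fin n → Fin n) × (Fin n → ℤ)
  | 0, μ, c, q, a => (Function.update μ a q, c)
  | fuel + 1, μ, c, q, a =>
    if π a = j then (Function.update μ a q, c)
    else if q = a ∨ (cval a j < cval a (π a) ∧ cval a (π a) < cval a q) then
      restrictLoop π j fuel (Function.update μ a q)
        (if q = a then Function.update c a 1 else c) (π a) (a - 1)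
    else
      restrictLoop π j fuel μ c q (a - 1)

/-- The restriction algorithm: output `(μ, col')` from `(π, col)` and `j`. -/
def restrictAlg {n : ℕ} [NeZero n] (π : Equiv.Perm (Fin n)) (col : Fin n → ℤ) (j : Fin n) :
    (Fin n → Fin n) × (Fin n → ℤ) :=
  restrictLoop π j n (Function.update (⇑π) j j) (Function.update col j 1) (π j) (j - 1)


set_option linter.unusedSectionVars false
set_option maxHeartbeats 1000000

section AuxLemmas
open scoped Fin.NatCast Fin.CommRing
variable {n : ℕ} [NeZero n]



lemma fin_sub_val (u v : Fin n) : ((u - v : Fin n) : ℕ) =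
    if v.val ≤ u.val then u.val - v.val else u.val + n - v.val := by
  rcases le_or_gt v.val u.val with h | h
  · rw [if_pos h, Fin.sub_val_of_le h]
  · rw [if_neg (by omega), Fin.sub_def]
    simp only [Fin.val_mk]
    have hv := v.isLt
    have hu := u.isLt
    rw [Nat.mod_eq_of_lt (by omega)]
    omega

lemma cval_lt (t a : Fin n) : cval t a < n := (a - t).isLt

lemma cval_self (t : Fin n) : cval t t = 0 := by simp [cval]

lemma cval_inj {t a b : Fin n} (h : cval t a = cval t b) : a = b := by
  have : a - t = b - t := Fin.val_injective h
  exact sub_left_injective this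

lemma cval_eq_zero_iff {t a : Fin n} : cval t a = 0 ↔ a = t := by
  constructor
  · intro h
    apply cval_inj (t := t)
    rw [h, cval_self]
  · rintro rfl; exact cval_self _

lemma cval_shift (s t x : Fin n) : cval t x =
    if cval s t ≤ cval s x then cval s x - cval s t else cval s x + n - cval s t := by
  have h1 : x - t = (x - s) - (t - s) := by ring
  have : cval t x = (((x - s) - (t - s) : Fin n) : ℕ) := by rw [cval, h1]
  rw [this, fin_sub_val]
  rfl

lemma cval_succ_succ (t a : Fin n) : cval (t + 1) (a + 1) = cval t a := by
  unfold cval; congr 1; ring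

lemma two_le_of_ne {x t : Fin n} (h : x ≠ t) : 2 ≤ n := by
  by_contra hc
  push_neg at hc
  interval_cases n
  · exact x.elim0
  · exact h (Subsingleton.elim x t)

lemma cval_base_succ (h2 : 2 ≤ n) (t : Fin n) : cval t (t + 1) = 1 := by
  show ((t + 1 - t : Fin n) : ℕ) = 1
  have h : t + 1 - t = (1 : Fin n) := by ring
  rw [h, Fin.val_one', Nat.mod_eq_of_lt (by omega)]

lemma cval_succ_right {t x : Fin n} (h : x ≠ t) : cval (t + 1) x + 1 = cval t x := by
  have h2 : 2 ≤ n := two_le_of_ne h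
  have h1 : cval t (t + 1) = 1 := cval_base_succ h2 t
  have hx0 : cval t x ≠ 0 := fun hc => h (cval_eq_zero_iff.mp hc)
  rw [cval_shift t (t + 1) x, h1]
  rw [if_pos (by omega)]
  omega

lemma cval_succ_base (h2 : 2 ≤ n) (t : Fin n) : cval (t + 1) t = n - 1 := by
  have h1 : cval t (t + 1) = 1 := cval_base_succ h2 t
  rw [cval_shift t (t + 1) t, h1, cval_self]
  rw [if_neg (by omega)]
  omega



variable (P : DecoratedPerm n)

lemma mem_necklaceOf {r i : Fin n} : i ∈ necklaceOf P r ↔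
    (cval r i < cval r (P.π.symm i) ∨ (P.π i = i ∧ P.col i = -1)) := by
  simp [necklaceOf]

lemma symm_ne_iff {i : Fin n} : P.π.symm i ≠ i ↔ P.π i ≠ i := by
  constructor
  · intro h hc; exact h (by rw [Equiv.symm_apply_eq, hc])
  · intro h hc
    apply h
    conv_lhs => rw [← hc]
    rw [Equiv.apply_symm_apply]

lemma self_mem_necklaceOf {r : Fin n} : r ∈ necklaceOf P r ↔ (P.π r ≠ r ∨ P.col r = -1) := by
  rw [mem_necklaceOf]
  rw [cval_self]
  constructor
  · rintro (h | ⟨h1, h2⟩)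
    · left
      intro hc
      have hs : P.π.symm r = r := by rw [Equiv.symm_apply_eq, hc]
      rw [hs, cval_self] at h; omega
    · right; exact h2
  · rintro (h | h)
    · left
      have hs : P.π.symm r ≠ r := (symm_ne_iff P).mpr h
      have : cval r (P.π.symm r) ≠ 0 := fun hc => hs (cval_eq_zero_iff.mp hc)
      omega
    · rcases eq_or_ne (P.π r) r with hf | hf
      · right; exact ⟨hf, h⟩
      · left
        have hs : P.π.symm r ≠ r := (symm_ne_iff P).mpr hf
        have : cval r (P.π.symm r) ≠ 0 := fun hc => hs (cval_eq_zero_iff.mp hc)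
        omega

lemma pi_not_mem_necklaceOf {r : Fin n} (h : P.π r ≠ r) : P.π r ∉ necklaceOf P r := by
  rw [mem_necklaceOf]
  rintro (hc | ⟨h1, _⟩)
  · rw [Equiv.symm_apply_apply, cval_self] at hc; omega
  · exact h (P.π.injective h1)

lemma step_fixed {r : Fin n} (h : P.π r = r) :
    necklaceOf P (r + 1) = necklaceOf P r := by
  ext x
  simp only [mem_necklaceOf]
  rcases eq_or_ne (P.π x) x with hx | hx
  · have hs : P.π.symm x = x := by rw [Equiv.symm_apply_eq, hx]
    rw [hs]; simp
  · have hxr : x ≠ r := fun e => hx (by rw [e, h, ← e])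
    have hsr : P.π.symm x ≠ r := by
      intro e
      have : x = P.π r := by rw [← e]; simp
      rw [h] at this; exact hxr this
    have h1 := cval_succ_right hxr
    have h2 := cval_succ_right hsr
    have : (cval (r+1) x < cval (r+1) (P.π.symm x)) ↔ (cval r x < cval r (P.π.symm x)) := by
      omega
    rw [this]

lemma step_moved {r : Fin n} (h : P.π r ≠ r) :
    necklaceOf P (r + 1) = insert (P.π r) (necklaceOf P r \ {r}) := by
  have h2 : 2 ≤ n := two_le_of_ne h
  ext x
  simp only [mem_necklaceOf, Finset.mem_insert, Finset.mem_sdiff, Finset.mem_singleton]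
  rcases eq_or_ne x r with rfl | hxr
  · have hs : P.π.symm x ≠ x := (symm_ne_iff P).mpr h
    have hb : cval (x+1) x = n - 1 := cval_succ_base h2 x
    have hlt := cval_lt (x+1) (P.π.symm x)
    have hne : cval (x+1) (P.π.symm x) ≠ n - 1 := by
      intro hc
      exact hs (cval_inj (t := x+1) (by rw [hc, hb]))
    constructor
    · rintro (hc | ⟨h1, _⟩)
      · omega
      · exact absurd h1 h
    · rintro (hc | ⟨_, hc⟩)
      · exact absurd hc.symm h
      · exact absurd rfl hc
  · rcases eq_or_ne x (P.π r) with hxe | hxp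
    · have hs : P.π.symm x = r := by rw [Equiv.symm_apply_eq, hxe]
      have hb : cval (r+1) r = n - 1 := cval_succ_base h2 r
      have hlt := cval_lt (r+1) x
      have hne : cval (r+1) x ≠ n - 1 := by
        intro hc
        exact hxr (cval_inj (t := r+1) (by rw [hc, hb]))
      constructor
      · intro _; exact Or.inl hxe
      · intro _; left; rw [hs, hb]; omega
    · have hrhs : ((x = P.π r ∨ ((cval r x < cval r (P.π.symm x) ∨ (P.π x = x ∧ P.col x = -1)) ∧ ¬x = r))
          ↔ (cval r x < cval r (P.π.symm x) ∨ (P.π x = x ∧ P.col x = -1))) := by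
        tauto
      rw [hrhs]
      rcases eq_or_ne (P.π x) x with hx | hx
      · have hs : P.π.symm x = x := by rw [Equiv.symm_apply_eq, hx]
        rw [hs]; simp
      · have hsr : P.π.symm x ≠ r := by
          intro e
          have : x = P.π r := by rw [← e]; simp
          exact hxp this
        have h1 := cval_succ_right hxr
        have h3 := cval_succ_right hsr
        have : (cval (r+1) x < cval (r+1) (P.π.symm x)) ↔ (cval r x < cval r (P.π.symm x)) := by
          omega
        rw [this]

section
variable {n : ℕ} [NeZero n] (P : DecoratedPerm n)

lemma card_step (r : Fin n) : (necklaceOf P (r + 1)).card = (necklaceOf P r).card := by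
  rcases eq_or_ne (P.π r) r with h | h
  · rw [step_fixed P h]
  · rw [step_moved P h]
    have hr : r ∈ necklaceOf P r := (self_mem_necklaceOf P).mpr (Or.inl h)
    have hp : P.π r ∉ necklaceOf P r := pi_not_mem_necklaceOf P h
    rw [Finset.sdiff_singleton_eq_erase]
    rw [Finset.card_insert_of_notMem (by
      rw [Finset.mem_erase]; rintro ⟨-, hc⟩; exact hp hc)]
    rw [Finset.card_erase_of_mem hr]
    have : 1 ≤ (necklaceOf P r).card := Finset.card_pos.mpr ⟨r, hr⟩
    omega

lemma card_const (r b : Fin n) : (necklaceOf P b).card = (necklaceOf P r).card := by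
  have key : ∀ (e : ℕ) (r : Fin n), (necklaceOf P (r + (e : Fin n))).card = (necklaceOf P r).card := by
    intro e
    induction e with
    | zero => intro r; simp
    | succ e ih =>
      intro r
      have hcast : (((e + 1 : ℕ)) : Fin n) = ((e : ℕ) : Fin n) + 1 := by push_cast; ring
      rw [hcast, ← add_assoc, card_step, ih]
  have hb : b = r + ((cval r b : ℕ) : Fin n) := by
    show b = r + (((b - r : Fin n) : ℕ) : Fin n)
    rw [Fin.cast_val_eq_self]
    ring
  rw [hb, key]

lemma cnt_step (r t : Fin n) (m : ℕ) (h : P.π r ≠ r) :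
    ((necklaceOf P (r + 1)).filter (fun x => cval t x ≤ m)).card
      + (if cval t r ≤ m then 1 else 0)
    = ((necklaceOf P r).filter (fun x => cval t x ≤ m)).card
      + (if cval t (P.π r) ≤ m then 1 else 0) := by
  have hr : r ∈ necklaceOf P r := (self_mem_necklaceOf P).mpr (Or.inl h)
  have hp : P.π r ∉ necklaceOf P r := pi_not_mem_necklaceOf P h
  rw [step_moved P h, Finset.sdiff_singleton_eq_erase, Finset.filter_insert,
    Finset.filter_erase]
  set A := (necklaceOf P r).filter (fun x => cval t x ≤ m) with hA
  have hpA : P.π r ∉ A.erase r := by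
    rw [Finset.mem_erase]; rintro ⟨-, hc⟩
    exact hp (Finset.mem_filter.mp hc).1
  have hrA : ∀ (h' : cval t r ≤ m), r ∈ A :=
    fun h' => Finset.mem_filter.mpr ⟨hr, h'⟩
  have hnrA : ∀ (h' : ¬ cval t r ≤ m), r ∉ A := by
    intro h' hc
    exact h' (Finset.mem_filter.mp hc).2
  split_ifs with hcp hcr hcr
  · rw [Finset.card_insert_of_notMem hpA, Finset.card_erase_of_mem (hrA hcr)]
    have := Finset.card_pos.mpr ⟨r, hrA hcr⟩
    omega
  · rw [Finset.erase_eq_of_notMem (hnrA hcr),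
      Finset.card_insert_of_notMem (fun hc => hp (Finset.mem_filter.mp hc).1)]
  · rw [Finset.card_erase_of_mem (hrA hcr)]
    have := Finset.card_pos.mpr ⟨r, hrA hcr⟩
    omega
  · rw [Finset.erase_eq_of_notMem (hnrA hcr)]

lemma cnt_le (t b : Fin n) (m : ℕ) :
    ((necklaceOf P b).filter (fun x => cval t x ≤ m)).card
      ≤ ((necklaceOf P t).filter (fun x => cval t x ≤ m)).card := by
  have key : ∀ s : ℕ, s ≤ n →
      ((necklaceOf P (t + (s : Fin n))).filter (fun x => cval t x ≤ m)).card
        + ((Finset.range s).filter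
            (fun e : ℕ => P.π (t + (e : Fin n)) ≠ (t + (e : Fin n)) ∧ e ≤ m)).card
      = ((necklaceOf P t).filter (fun x => cval t x ≤ m)).card
        + ((Finset.range s).filter
            (fun e : ℕ => P.π (t + (e : Fin n)) ≠ (t + (e : Fin n))
              ∧ cval t (P.π (t + (e : Fin n))) ≤ m)).card := by
    intro s
    induction s with
    | zero => intro _; simp
    | succ s ih =>
      intro hs
      have ihs := ih (by omega)
      have hcast : (((s + 1 : ℕ)) : Fin n) = ((s : ℕ) : Fin n) + 1 := by push_cast; ring
      have hcvr : cval t (t + (s : Fin n)) = s := by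
        show ((t + (s : Fin n) - t : Fin n) : ℕ) = s
        have h1 : t + (s : Fin n) - t = (s : Fin n) := by ring
        rw [h1, Fin.val_natCast, Nat.mod_eq_of_lt (by omega)]
      rw [hcast, ← add_assoc, Finset.range_add_one, Finset.filter_insert, Finset.filter_insert]
      have hsnr : s ∉ Finset.range s := by simp
      have hnm1 : s ∉ (Finset.range s).filter
          (fun e : ℕ => P.π (t + (e : Fin n)) ≠ (t + (e : Fin n)) ∧ e ≤ m) :=
        fun hc => hsnr (Finset.mem_of_mem_filter _ hc)
      have hnm2 : s ∉ (Finset.range s).filter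
          (fun e : ℕ => P.π (t + (e : Fin n)) ≠ (t + (e : Fin n))
            ∧ cval t (P.π (t + (e : Fin n))) ≤ m) :=
        fun hc => hsnr (Finset.mem_of_mem_filter _ hc)
      rcases eq_or_ne (P.π (t + (s : Fin n))) (t + (s : Fin n)) with hf | hf
      · rw [if_neg (by simp [hf]), if_neg (by simp [hf]), step_fixed P hf]
        exact ihs
      · have hstep := cnt_step P (t + (s : Fin n)) t m hf
        rw [hcvr] at hstep
        by_cases h1 : s ≤ m <;>
          by_cases h2 : cval t (P.π (t + (s : Fin n))) ≤ m
        · rw [if_pos ⟨hf, h1⟩, if_pos ⟨hf, h2⟩,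
            Finset.card_insert_of_notMem hnm1, Finset.card_insert_of_notMem hnm2]
          rw [if_pos h1, if_pos h2] at hstep
          omega
        · rw [if_pos ⟨hf, h1⟩, if_neg (fun hc => h2 hc.2),
            Finset.card_insert_of_notMem hnm1]
          rw [if_pos h1, if_neg h2] at hstep
          omega
        · rw [if_neg (fun hc => h1 hc.2), if_pos ⟨hf, h2⟩,
            Finset.card_insert_of_notMem hnm2]
          rw [if_neg h1, if_pos h2] at hstep
          omega
        · rw [if_neg (fun hc => h1 hc.2), if_neg (fun hc => h2 hc.2)]
          rw [if_neg h1, if_neg h2] at hstep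
          omega
  have hBA : ∀ s : ℕ, s ≤ n →
      ((Finset.range s).filter
          (fun e : ℕ => P.π (t + (e : Fin n)) ≠ (t + (e : Fin n))
            ∧ cval t (P.π (t + (e : Fin n))) ≤ m)).card
      ≤ ((Finset.range s).filter
          (fun e : ℕ => P.π (t + (e : Fin n)) ≠ (t + (e : Fin n)) ∧ e ≤ m)).card := by
    intro s hs
    rcases le_or_gt s (m + 1) with hsm | hsm
    · apply Finset.card_le_card
      intro e he
      rw [Finset.mem_filter] at he ⊢
      obtain ⟨her, hnf, -⟩ := he
      have : e < s := Finset.mem_range.mp her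
      exact ⟨her, hnf, by omega⟩
    · apply Finset.card_le_card_of_injOn (f := fun e : ℕ => cval t (P.π (t + (e : Fin n))))
      · intro e he
        simp only [Finset.mem_coe, Finset.mem_filter] at he ⊢
        obtain ⟨her, hnf, hem⟩ := he
        have heq : t + ((cval t (P.π (t + (e : Fin n))) : ℕ) : Fin n)
            = P.π (t + (e : Fin n)) := by
          show t + (((P.π (t + (e : Fin n)) - t : Fin n).val : ℕ) : Fin n) = _
          rw [Fin.cast_val_eq_self]
          ring
        refine ⟨Finset.mem_range.mpr (by omega), ?_, hem⟩
        rw [heq]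
        intro hc
        exact hnf (P.π.injective hc)
      · intro e1 he1 e2 he2 hfe
        simp only [Finset.mem_coe, Finset.mem_filter, Finset.mem_range] at he1 he2
        have h1 : P.π (t + (e1 : Fin n)) = P.π (t + (e2 : Fin n)) := cval_inj hfe
        have h2 : t + (e1 : Fin n) = t + (e2 : Fin n) := P.π.injective h1
        have h3 : (e1 : Fin n) = (e2 : Fin n) := by
          exact add_left_cancel h2
        have h4 : e1 % n = e2 % n := by
          have := congrArg Fin.val h3
          rwa [Fin.val_natCast, Fin.val_natCast] at this
        rw [Nat.mod_eq_of_lt (by omega), Nat.mod_eq_of_lt (by omega)] at h4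
        exact h4
  have hsb : cval t b ≤ n := le_of_lt (cval_lt t b)
  have hb : b = t + ((cval t b : ℕ) : Fin n) := by
    show b = t + (((b - t : Fin n) : ℕ) : Fin n)
    rw [Fin.cast_val_eq_self]
    ring
  have hk := key (cval t b) hsb
  have hba := hBA (cval t b) hsb
  rw [← hb] at hk
  omega

end

lemma forall₂_le_antisymm : ∀ (l₁ l₂ : List ℕ),
    List.Forall₂ (· ≤ ·) l₁ l₂ → List.Forall₂ (· ≤ ·) l₂ l₁ → l₁ = l₂ := by
  intro l₁ l₂ h1 h2
  induction h1 with
  | nil => rfl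
  | cons hab h ih =>
    rcases h2 with _ | ⟨hba, h2'⟩
    rw [le_antisymm hab hba, ih h2']

lemma gale_of_counts (S T : Finset ℕ) (hcard : T.card = S.card)
    (h : ∀ m : ℕ, (T.filter (fun x => x ≤ m)).card ≤ (S.filter (fun x => x ≤ m)).card) :
    List.Forall₂ (· ≤ ·) (S.sort (· ≤ ·)) (T.sort (· ≤ ·)) := by
  set lS := S.sort (· ≤ ·) with hlS
  set lT := T.sort (· ≤ ·) with hlT
  have hlenS : lS.length = S.card := Finset.length_sort _
  have hlenT : lT.length = T.card := Finset.length_sort _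
  have hlen : lS.length = lT.length := by omega
  rw [List.forall₂_iff_get]
  refine ⟨hlen, ?_⟩
  intro i h1 h2
  by_contra hab
  push_neg at hab
  set a := lS.get ⟨i, h1⟩ with ha
  set b := lT.get ⟨i, h2⟩ with hb
  have hTsort : List.Pairwise (· ≤ ·) lT := Finset.pairwise_sort _ _
  have hSsort : List.Pairwise (· ≤ ·) lS := Finset.pairwise_sort _ _
  have hTnd : lT.Nodup := Finset.sort_nodup _ _
  have hSnd : lS.Nodup := Finset.sort_nodup _ _
  have hsub1 : (lT.take (i + 1)).toFinset ⊆ T.filter (fun x => x ≤ b) := by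
    intro x hx
    rw [List.mem_toFinset] at hx
    rw [Finset.mem_filter]
    refine ⟨(Finset.mem_sort _).mp (List.mem_of_mem_take hx), ?_⟩
    rw [List.mem_iff_getElem] at hx
    obtain ⟨k, hk, hkx⟩ := hx
    rw [List.getElem_take] at hkx
    have hki : k < i + 1 := by
      have := List.length_take (i := i+1) (l := lT)
      omega
    rcases Nat.lt_or_ge k i with hki' | hki'
    · have := List.Pairwise.rel_get_of_lt hTsort
        (a := ⟨k, by omega⟩) (b := ⟨i, h2⟩) (by exact hki')
      rw [← hkx]
      exact this
    · have : k = i := by omega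
      subst this
      rw [← hkx, hb, List.get_eq_getElem]
  have hcard1 : i + 1 ≤ (T.filter (fun x => x ≤ b)).card := by
    have hnd : (lT.take (i + 1)).Nodup := List.Nodup.sublist (List.take_sublist _ _) hTnd
    have hc : (lT.take (i + 1)).toFinset.card = i + 1 := by
      rw [List.toFinset_card_of_nodup hnd, List.length_take]
      omega
    rw [← hc]
    exact Finset.card_le_card hsub1
  have hsub2 : S.filter (fun x => x ≤ b) ⊆ (lS.take i).toFinset := by
    intro x hx
    rw [Finset.mem_filter] at hx
    obtain ⟨hxS, hxb⟩ := hx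
    have hxl : x ∈ lS := (Finset.mem_sort _).mpr hxS
    rw [List.mem_iff_getElem] at hxl
    obtain ⟨k, hk, hkx⟩ := hxl
    have hki : k < i := by
      by_contra hc
      push_neg at hc
      have hax : a ≤ x := by
        rcases Nat.lt_or_ge i k with hik | hik
        · have := List.Pairwise.rel_get_of_lt hSsort
            (a := ⟨i, h1⟩) (b := ⟨k, hk⟩) (by exact hik)
          rw [← hkx]
          exact this
        · have : i = k := by omega
          subst this
          rw [← hkx, ha, List.get_eq_getElem]
      omega
    rw [List.mem_toFinset, List.mem_iff_getElem]
    refine ⟨k, by rw [List.length_take]; omega, ?_⟩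
    rw [List.getElem_take]
    exact hkx
  have hcard2 : (S.filter (fun x => x ≤ b)).card ≤ i := by
    have := Finset.card_le_card hsub2
    have h2' := List.toFinset_card_le (lS.take i)
    have h3' := List.length_take (i := i) (l := lS)
    omega
  have := h b
  omega


section
variable {n : ℕ} [NeZero n] (P : DecoratedPerm n)

lemma necklace_gale (t b : Fin n) : galeLE t (necklaceOf P t) (necklaceOf P b) := by
  unfold galeLE galeLEKey
  apply gale_of_counts
  · rw [Finset.card_image_of_injective _ (fun x y h => cval_inj (t := t) h),
      Finset.card_image_of_injective _ (fun x y h => cval_inj (t := t) h)]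
    exact card_const P t b
  · intro m
    rw [Finset.filter_image, Finset.filter_image,
      Finset.card_image_of_injective _ (fun x y h => cval_inj (t := t) h),
      Finset.card_image_of_injective _ (fun x y h => cval_inj (t := t) h)]
    exact cnt_le P t b m

lemma gale_antisymm {b : Fin n} {A B : Finset (Fin n)} (h1 : galeLE b A B)
    (h2 : galeLE b B A) : A = B := by
  unfold galeLE galeLEKey at h1 h2
  have hl := forall₂_le_antisymm _ _ h1 h2
  have himg : A.image (cval b) = B.image (cval b) := by
    ext x
    rw [← Finset.mem_sort (α := ℕ) (· ≤ ·), hl, Finset.mem_sort]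
  exact Finset.image_injective (f := cval b) (fun x y h => cval_inj h) himg

end
end AuxLemmas

/-- for `a` in the cyclic interval `(π⁻¹(j), j)`, we have `j ∈ I_t`
for all `t ∈ [π⁻¹(j)+1, j]`, and `phi(a) = phi(a+1) = j` and `μ(a) = π(a)`,
where `μ` is the decorated permutation of `M' = {H ∈ M : j ∈ H}`. -/
theorem contraction_case_two (n : ℕ) [NeZero n] (P : DecoratedPerm n) (j : Fin n)
    (hj : P.π j ≠ j) (K : Fin n → Finset (Fin n)) (Q : DecoratedPerm n)
    -- `K_b` is the `≤_b`-minimal basis of `M'`: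
    (hK : ∀ b : Fin n,
      (j ∈ K b ∧ ∀ t : Fin n, galeLE t (necklaceOf P t) (K b)) ∧
      ∀ H : Finset (Fin n),
        (j ∈ H ∧ ∀ t : Fin n, galeLE t (necklaceOf P t) H) → galeLE b (K b) H)
    -- `Q = (μ, col')` is the decorated permutation of the necklace `K`:
    (hQ : Corresponds K Q) :
    (∀ t : Fin n, cval (P.π.symm j + 1) t ≤ cval (P.π.symm j + 1) j →
        j ∈ necklaceOf P t) ∧
    (∀ a : Fin n, a ≠ P.π.symm j → cval (P.π.symm j) a < cval (P.π.symm j) j →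
        phiSet (necklaceOf P) j a = {j} ∧
        phiSet (necklaceOf P) j (a + 1) = {j} ∧
        Q.π a = P.π a) := by
  set p := P.π.symm j with hp
  have hpj : p ≠ j := fun e => hj ((Equiv.symm_apply_eq _).mp e).symm
  have hjp : j ≠ p := Ne.symm hpj
  have h2n : 2 ≤ n := two_le_of_ne hpj
  have part1 : ∀ t : Fin n, cval (p + 1) t ≤ cval (p + 1) j → j ∈ necklaceOf P t := by
    intro t ht
    rw [mem_necklaceOf]
    left
    have hJb : cval (p + 1) p = n - 1 := cval_succ_base h2n p
    have hJ : cval (p + 1) j ≠ n - 1 := by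
      intro hc
      exact hjp (cval_inj (t := p + 1) (by rw [hc, hJb]))
    have hjlt := cval_lt (p + 1) j
    have htlt := cval_lt (p + 1) t
    rw [← hp, cval_shift (p + 1) t j, cval_shift (p + 1) t p, hJb]
    rw [if_pos ht, if_pos (by omega)]
    omega
  refine ⟨part1, ?_⟩
  intro a ha hcv
  have hap1 : cval (p + 1) a + 1 = cval p a := cval_succ_right ha
  have hjp1 : cval (p + 1) j + 1 = cval p j := cval_succ_right hjp
  have hwa : cval (p + 1) a ≤ cval (p + 1) j := by omega
  have hwa1 : cval (p + 1) (a + 1) ≤ cval (p + 1) j := by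
    rw [cval_succ_succ]
    omega
  have hja : j ∈ necklaceOf P a := part1 a hwa
  have hja1 : j ∈ necklaceOf P (a + 1) := part1 (a + 1) hwa1
  have hKeq : ∀ b : Fin n, j ∈ necklaceOf P b → K b = necklaceOf P b := by
    intro b hjb
    obtain ⟨⟨hjK, hgale⟩, hmin⟩ := hK b
    have h1 : galeLE b (necklaceOf P b) (K b) := hgale b
    have h2 : galeLE b (K b) (necklaceOf P b) :=
      hmin _ ⟨hjb, fun t => necklace_gale P t b⟩
    exact gale_antisymm h2 h1
  have hKa : K a = necklaceOf P a := hKeq a hja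
  have hKa1 : K (a + 1) = necklaceOf P (a + 1) := hKeq (a + 1) hja1
  refine ⟨by simp [phiSet, hja], by simp [phiSet, hja1], ?_⟩
  rcases eq_or_ne (P.π a) a with hfa | hfa
  · have hstep : necklaceOf P (a + 1) = necklaceOf P a := step_fixed P hfa
    rcases P.col_fixed a hfa with hc1 | hc1
    · have hna : a ∉ necklaceOf P a := by
        rw [self_mem_necklaceOf]
        rintro (h | h)
        · exact h hfa
        · rw [hc1] at h; norm_num at h
      obtain ⟨hq, -⟩ := (hQ a).1
        ⟨by rw [hKa1, hKa]; exact hstep, by rw [hKa]; exact hna⟩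
      rw [hq, hfa]
    · have hma : a ∈ necklaceOf P a := (self_mem_necklaceOf P).mpr (Or.inr hc1)
      obtain ⟨hq, -⟩ := (hQ a).2.1
        ⟨by rw [hKa1, hKa]; exact hstep, by rw [hKa]; exact hma⟩
      rw [hq, hfa]
  · have hstep := step_moved P hfa
    have haI : a ∈ necklaceOf P a := (self_mem_necklaceOf P).mpr (Or.inl hfa)
    exact (hQ a).2.2 (P.π a) hfa (by rw [hKa]; exact haI)
      (by rw [hKa1, hKa]; exact hstep)
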